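/- Let V be a complex inner product space and let a, b, c ∈ V be nonzero vectors. Define the Hermitian angle between nonzero vectors u, v as ∠⟨u, v⟩ := arccos(|⟨u, v⟩|/(‖u‖·‖v‖)) ∈ [0, π/2]. Then the triangle inequality ∠⟨a, c⟩ ≤ ∠⟨a, b⟩ + ∠⟨b, c⟩ holds. -/

import Mathlib

open scoped InnerProductSpace

/-- The Hermitian angle between nonzero vectors of a complex inner product space:
`∠⟨u, v⟩ = arccos(|⟨u, v⟩| / (‖u‖·‖v‖)) ∈ [0, π/2]`. -/
noncomputable def hermitianAngle {V : Type*} [NormedAddCommGroup V]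
    [InnerProductSpace ℂ V] (u v : V) : ℝ :=
  Real.arccos (‖(⟪u, v⟫_ℂ : ℂ)‖ / (‖u‖ * ‖v‖))

open Real

private lemma arccos_anti' {w z : ℝ} (h : w ≤ z) : arccos z ≤ arccos w := by
  unfold Real.arccos
  have := Real.monotone_arcsin h
  linarith

private lemma arccos_tri' {x y z : ℝ} (hx0 : 0 ≤ x) (hx1 : x ≤ 1) (hy0 : 0 ≤ y) (hy1 : y ≤ 1)
    (h : x * y - Real.sqrt (1 - x ^ 2) * Real.sqrt (1 - y ^ 2) ≤ z) :
    arccos z ≤ arccos x + arccos y := by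
  set S := arccos x + arccos y with hS
  have hcos : Real.cos S = x * y - Real.sqrt (1 - x ^ 2) * Real.sqrt (1 - y ^ 2) := by
    rw [hS, Real.cos_add, Real.cos_arccos (by linarith) hx1, Real.cos_arccos (by linarith) hy1,
      Real.sin_arccos, Real.sin_arccos]
  have hS0 : 0 ≤ S := add_nonneg (Real.arccos_nonneg x) (Real.arccos_nonneg y)
  have hSpi : S ≤ π := by
    have h1 := Real.arccos_le_pi_div_two.2 hx0
    have h2 := Real.arccos_le_pi_div_two.2 hy0
    rw [hS]; linarith
  calc arccos z ≤ arccos (Real.cos S) := arccos_anti' (by rw [hcos]; exact h)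
    _ = S := Real.arccos_cos hS0 hSpi

private lemma norm_residual' {V : Type*} [NormedAddCommGroup V] [InnerProductSpace ℂ V]
    (a b : V) (hb : b ≠ 0) :
    ‖a - ((⟪b, a⟫_ℂ : ℂ) / (‖b‖:ℂ) ^ 2) • b‖ ^ 2
      = ‖a‖ ^ 2 - ‖(⟪a, b⟫_ℂ : ℂ)‖ ^ 2 / ‖b‖ ^ 2 := by
  have hbn : ‖b‖ ≠ 0 := norm_ne_zero_iff.2 hb
  have hB : (0:ℝ) < ‖b‖ ^ 2 := by positivity
  set k : ℂ := ⟪b, a⟫_ℂ / (‖b‖:ℂ) ^ 2 with hk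
  have hba : (⟪b, a⟫_ℂ : ℂ) = starRingEnd ℂ ⟪a, b⟫_ℂ := (inner_conj_symm b a).symm
  rw [@norm_sub_sq ℂ]
  have h1 : (⟪a, k • b⟫_ℂ : ℂ) = ⟪b, a⟫_ℂ * ⟪a, b⟫_ℂ / (‖b‖:ℂ) ^ 2 := by
    rw [inner_smul_right, hk]; ring
  have h2 : ((⟪b, a⟫_ℂ : ℂ) * ⟪a, b⟫_ℂ) = ((‖(⟪a, b⟫_ℂ : ℂ)‖ ^ 2 : ℝ) : ℂ) := by
    rw [hba, ← Complex.normSq_eq_conj_mul_self, Complex.normSq_eq_norm_sq]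
  have h3 : ‖k • b‖ ^ 2 = ‖(⟪a, b⟫_ℂ : ℂ)‖ ^ 2 / ‖b‖ ^ 2 := by
    rw [norm_smul, mul_pow, hk, norm_div, hba, RCLike.norm_conj]
    simp only [norm_pow, Complex.norm_real, norm_norm]
    field_simp
  have h4 : RCLike.re (((‖(⟪a, b⟫_ℂ : ℂ)‖ ^ 2 : ℝ) : ℂ) / (‖b‖:ℂ) ^ 2)
      = ‖(⟪a, b⟫_ℂ : ℂ)‖ ^ 2 / ‖b‖ ^ 2 := by
    rw [show ((‖b‖:ℂ)) ^ 2 = ((‖b‖ ^ 2 : ℝ) : ℂ) by push_cast; ring, ← Complex.ofReal_div]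
    simp only [RCLike.re_to_complex, Complex.ofReal_re]
  rw [h1, h2, h4, h3]
  ring

private lemma key' {V : Type*} [NormedAddCommGroup V] [InnerProductSpace ℂ V]
    (a b c : V) (hb : b ≠ 0) :
    ‖(⟪a, b⟫_ℂ : ℂ)‖ * ‖(⟪b, c⟫_ℂ : ℂ)‖ / ‖b‖ ^ 2 ≤ ‖(⟪a, c⟫_ℂ : ℂ)‖ +
      Real.sqrt (‖a‖ ^ 2 - ‖(⟪a, b⟫_ℂ : ℂ)‖ ^ 2 / ‖b‖ ^ 2) *
      Real.sqrt (‖c‖ ^ 2 - ‖(⟪b, c⟫_ℂ : ℂ)‖ ^ 2 / ‖b‖ ^ 2) := by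
  have hbn : ‖b‖ ≠ 0 := norm_ne_zero_iff.2 hb
  have hT : ((‖b‖:ℂ) ^ 2) ≠ 0 := by
    simp [pow_eq_zero_iff, norm_eq_zero, hb]
  set k : ℂ := ⟪b, a⟫_ℂ / (‖b‖:ℂ) ^ 2 with hk
  set m : ℂ := ⟪b, c⟫_ℂ / (‖b‖:ℂ) ^ 2 with hm
  set a' : V := a - k • b with ha'
  set c' : V := c - m • b with hc'
  have hbb : (⟪b, b⟫_ℂ : ℂ) = (‖b‖:ℂ) ^ 2 := inner_self_eq_norm_sq_to_K b
  have hba : (⟪b, a⟫_ℂ : ℂ) = starRingEnd ℂ ⟪a, b⟫_ℂ := (inner_conj_symm b a).symm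
  have hinner : (⟪a', c'⟫_ℂ : ℂ) = ⟪a, c⟫_ℂ - ⟪a, b⟫_ℂ * ⟪b, c⟫_ℂ / (‖b‖:ℂ) ^ 2 := by
    simp only [ha', hc', inner_sub_left, inner_sub_right, inner_smul_left, inner_smul_right,
      hbb, hk, hm, map_div₀, hba, RingHomCompTriple.comp_apply, RingHom.id_apply, map_pow,
      Complex.conj_ofReal]
    field_simp
    rw [div_self (Complex.ofReal_ne_zero.2 hbn)]; ring
  have hna : ‖a'‖ ^ 2 = ‖a‖ ^ 2 - ‖(⟪a, b⟫_ℂ : ℂ)‖ ^ 2 / ‖b‖ ^ 2 := norm_residual' a b hb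
  have hnc : ‖c'‖ ^ 2 = ‖c‖ ^ 2 - ‖(⟪b, c⟫_ℂ : ℂ)‖ ^ 2 / ‖b‖ ^ 2 := by
    rw [hc', hm, norm_residual' c b hb, ← norm_inner_symm]
  have hsa : Real.sqrt (‖a‖ ^ 2 - ‖(⟪a, b⟫_ℂ : ℂ)‖ ^ 2 / ‖b‖ ^ 2) = ‖a'‖ := by
    rw [← hna, Real.sqrt_sq (norm_nonneg _)]
  have hsc : Real.sqrt (‖c‖ ^ 2 - ‖(⟪b, c⟫_ℂ : ℂ)‖ ^ 2 / ‖b‖ ^ 2) = ‖c'‖ := by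
    rw [← hnc, Real.sqrt_sq (norm_nonneg _)]
  rw [hsa, hsc]
  have heq : (⟪a, b⟫_ℂ : ℂ) * ⟪b, c⟫_ℂ / (‖b‖:ℂ) ^ 2 = ⟪a, c⟫_ℂ - ⟪a', c'⟫_ℂ := by
    rw [hinner]; ring
  calc ‖(⟪a, b⟫_ℂ : ℂ)‖ * ‖(⟪b, c⟫_ℂ : ℂ)‖ / ‖b‖ ^ 2
      = ‖(⟪a, b⟫_ℂ : ℂ) * ⟪b, c⟫_ℂ / (‖b‖:ℂ) ^ 2‖ := by
        rw [norm_div, norm_mul]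
        simp [norm_pow]
    _ = ‖(⟪a, c⟫_ℂ : ℂ) - ⟪a', c'⟫_ℂ‖ := by rw [heq]
    _ ≤ ‖(⟪a, c⟫_ℂ : ℂ)‖ + ‖(⟪a', c'⟫_ℂ : ℂ)‖ := norm_sub_le _ _
    _ ≤ ‖(⟪a, c⟫_ℂ : ℂ)‖ + ‖a'‖ * ‖c'‖ := by
        gcongr; exact norm_inner_le_norm _ _

/-- Triangle inequality for Hermitian angles: for nonzero `a, b, c`,
`∠⟨a, c⟩ ≤ ∠⟨a, b⟩ + ∠⟨b, c⟩`. -/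
theorem stmt_3 {V : Type*} [NormedAddCommGroup V] [InnerProductSpace ℂ V]
    (a b c : V) (ha : a ≠ 0) (hb : b ≠ 0) (hc : c ≠ 0) :
    hermitianAngle a c ≤ hermitianAngle a b + hermitianAngle b c := by
  have hA : (0:ℝ) < ‖a‖ := norm_pos_iff.2 ha
  have hB : (0:ℝ) < ‖b‖ := norm_pos_iff.2 hb
  have hC : (0:ℝ) < ‖c‖ := norm_pos_iff.2 hc
  set p : ℝ := ‖(⟪a, b⟫_ℂ : ℂ)‖ with hp
  set q : ℝ := ‖(⟪b, c⟫_ℂ : ℂ)‖ with hq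
  set r : ℝ := ‖(⟪a, c⟫_ℂ : ℂ)‖ with hr
  have hpAB : p ≤ ‖a‖ * ‖b‖ := norm_inner_le_norm a b
  have hqBC : q ≤ ‖b‖ * ‖c‖ := norm_inner_le_norm b c
  have hp0 : 0 ≤ p := norm_nonneg _
  have hq0 : 0 ≤ q := norm_nonneg _
  have hu : (0:ℝ) ≤ ‖a‖ ^ 2 - p ^ 2 / ‖b‖ ^ 2 := by
    rw [sub_nonneg, div_le_iff₀ (by positivity)]
    nlinarith
  have hw : (0:ℝ) ≤ ‖c‖ ^ 2 - q ^ 2 / ‖b‖ ^ 2 := by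
    rw [sub_nonneg, div_le_iff₀ (by positivity)]
    nlinarith
  unfold hermitianAngle
  apply arccos_tri'
  · positivity
  · rw [div_le_one (by positivity)]; exact hpAB
  · positivity
  · rw [div_le_one (by positivity)]; exact hqBC
  · have hsx : Real.sqrt (1 - (p / (‖a‖ * ‖b‖)) ^ 2)
        = Real.sqrt (‖a‖ ^ 2 - p ^ 2 / ‖b‖ ^ 2) / ‖a‖ := by
      rw [show 1 - (p / (‖a‖ * ‖b‖)) ^ 2 = (‖a‖ ^ 2 - p ^ 2 / ‖b‖ ^ 2) / ‖a‖ ^ 2 by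
        field_simp]
      rw [Real.sqrt_div hu, Real.sqrt_sq hA.le]
    have hsy : Real.sqrt (1 - (q / (‖b‖ * ‖c‖)) ^ 2)
        = Real.sqrt (‖c‖ ^ 2 - q ^ 2 / ‖b‖ ^ 2) / ‖c‖ := by
      rw [show 1 - (q / (‖b‖ * ‖c‖)) ^ 2 = (‖c‖ ^ 2 - q ^ 2 / ‖b‖ ^ 2) / ‖c‖ ^ 2 by
        field_simp]
      rw [Real.sqrt_div hw, Real.sqrt_sq hC.le]
    rw [hsx, hsy]
    have hk := key' a b c hb
    rw [← hp, ← hq, ← hr] at hk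
    rw [show p / (‖a‖ * ‖b‖) * (q / (‖b‖ * ‖c‖)) -
        Real.sqrt (‖a‖ ^ 2 - p ^ 2 / ‖b‖ ^ 2) / ‖a‖ *
          (Real.sqrt (‖c‖ ^ 2 - q ^ 2 / ‖b‖ ^ 2) / ‖c‖)
        = (p * q / ‖b‖ ^ 2 - Real.sqrt (‖a‖ ^ 2 - p ^ 2 / ‖b‖ ^ 2) *
            Real.sqrt (‖c‖ ^ 2 - q ^ 2 / ‖b‖ ^ 2)) / (‖a‖ * ‖c‖) by
      field_simp]
    rw [div_le_div_iff₀ (by positivity) (by positivity)]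
    nlinarith [hk, mul_pos hA hC]
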